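/- For every ε > 0, every spin field v : Ω⁰_ε → S¹, and every pair of nearest neighbors (i, j) ∈ Ω¹_ε, one has 2π · dist(u(v)(i) − u(v)(j), ℤ) = d_{S¹}(v(i), v(j)), where u(v) = θ(v)/(2π) with θ(v) ∈ [0, 2π) the phase of v, and d_{S¹} is the geodesic distance on the unit circle. Consequently XY_ε(v) ≤ 4π² SD_ε(u(v)), where XY_ε(v) = ½ Σ_{(i,j)} |v(i) − v(j)|² and SD_ε(u) = ½ Σ_{(i,j)} dist²(u(i) − u(j), ℤ). -/

import Mathlib

open MeasureTheory Filter

noncomputable section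

/-- The position in `ℝ²` of the lattice point `i ∈ ℤ²` of the lattice `εℤ²`. -/
def pt (ε : ℝ) (i : ℤ × ℤ) : ℝ × ℝ := (ε * i.1, ε * i.2)

/-- `i` is a point of the lattice `Ω⁰_ε = εℤ² ∩ Ω`. -/
def latticePt (ε : ℝ) (Ω : Set (ℝ × ℝ)) (i : ℤ × ℤ) : Prop := pt ε i ∈ Ω

/-- `(i, j)` is a nearest-neighbor bond in `Ω¹_ε`: both endpoints lie in `Ω` and
`j = i + e₁` or `j = i + e₂` (so that `|i − j| = ε` and `i ≤ j` componentwise). -/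
def bond (ε : ℝ) (Ω : Set (ℝ × ℝ)) (i j : ℤ × ℤ) : Prop :=
  latticePt ε Ω i ∧ latticePt ε Ω j ∧ (j = i + (1, 0) ∨ j = i + (0, 1))

/-- `i ∈ Ω²_ε`: the closed cell `i + [0, ε]²` is contained in `Ω`. -/
def cellIn (ε : ℝ) (Ω : Set (ℝ × ℝ)) (i : ℤ × ℤ) : Prop :=
  Set.Icc (pt ε i) (pt ε i + (ε, ε)) ⊆ Ω

/-- The center of the cell `i + [0, ε]²`. -/
def cellCenter (ε : ℝ) (i : ℤ × ℤ) : ℝ × ℝ := pt ε i + (ε / 2, ε / 2)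

/-- The projection `P : ℝ → ℤ` onto the nearest integer (with the tie-breaking convention
making `t − P t ∈ (−1/2, 1/2]`). -/
def Pint (t : ℝ) : ℤ := ⌈t - 1 / 2⌉

/-- The elastic part of the discrete strain of `u` on the (oriented) bond from `i` to `j`:
`β^e_u = 𝐝u − P(𝐝u) ∈ (−1/2, 1/2]`, where `𝐝u_{i,j} = u(j) − u(i)`. -/
def betaE (u : ℤ × ℤ → ℝ) (i j : ℤ × ℤ) : ℝ :=
  (u j - u i) - (Pint (u j - u i) : ℝ)

/-- The plastic part of the discrete strain: `β^p_u = P(𝐝u) ∈ ℤ`. -/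
def betaP (u : ℤ × ℤ → ℝ) (i j : ℤ × ℤ) : ℝ := (Pint (u j - u i) : ℝ)

/-- The discrete curl of a bond function `ξ` around the cell with lower-left corner `i`:
`𝐝ξ(i) = ξ_{i,i+e₂} + ξ_{i+e₂,i+e₁+e₂} − ξ_{i+e₁,i+e₁+e₂} − ξ_{i,i+e₁}`. -/
def dcurl (ξ : ℤ × ℤ → ℤ × ℤ → ℝ) (i : ℤ × ℤ) : ℝ :=
  ξ i (i + (0, 1)) + ξ (i + (0, 1)) (i + (1, 1)) - ξ (i + (1, 0)) (i + (1, 1)) -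
    ξ i (i + (1, 0))

/-- The discrete dislocation function `α_u(i) = 𝐝β^e_u(i)`. -/
def alphaSD (u : ℤ × ℤ → ℝ) (i : ℤ × ℤ) : ℝ := dcurl (betaE u) i

/-- The discrete screw-dislocation energy
`SD_ε(u) = ½ Σ_{(i,j) ∈ Ω¹_ε} dist²(u(i) − u(j), ℤ)`. -/
def SDen (ε : ℝ) (Ω : Set (ℝ × ℝ)) (u : ℤ × ℤ → ℝ) : ℝ :=
  (1 / 2) * ∑' b : {b : (ℤ × ℤ) × (ℤ × ℤ) // bond ε Ω b.1 b.2},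
    (betaE u b.1.1 b.1.2) ^ 2

/-- The total variation `|μ_u|(Ω)` of the discrete dislocation measure
`μ_u = Σ_{i ∈ Ω²_ε} α_u(i) δ_{i+(ε/2,ε/2)}`. -/
def SDtv (ε : ℝ) (Ω : Set (ℝ × ℝ)) (u : ℤ × ℤ → ℝ) : ℝ :=
  ∑' i : {i : ℤ × ℤ // cellIn ε Ω i}, |alphaSD u i|

/-- The phase `u(v) = θ(v)/2π ∈ [0, 1)` of a spin field `v` with values in `S¹ ⊆ ℂ`
(defined by `v = e^{2πi u(v)}`; any determination of the phase gives the same discrete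
vorticity). -/
def phaseu (v : ℤ × ℤ → ℂ) (l : ℤ × ℤ) : ℝ :=
  if 0 ≤ (v l).arg then (v l).arg / (2 * Real.pi) else (v l).arg / (2 * Real.pi) + 1

/-- The discrete vorticity `γ_v = α_{θ(v)/2π}` of a spin field `v`. -/
def gammaXY (v : ℤ × ℤ → ℂ) (i : ℤ × ℤ) : ℝ := alphaSD (phaseu v) i

/-- The `XY` energy `XY_ε(v) = ½ Σ_{(i,j) ∈ Ω¹_ε} |v(i) − v(j)|²`. -/
def XYen (ε : ℝ) (Ω : Set (ℝ × ℝ)) (v : ℤ × ℤ → ℂ) : ℝ :=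
  (1 / 2) * ∑' b : {b : (ℤ × ℤ) × (ℤ × ℤ) // bond ε Ω b.1 b.2},
    ‖v b.1.1 - v b.1.2‖ ^ 2

/-- The total variation `|μ_v|(Ω)` of the discrete vorticity measure. -/
def XYtv (ε : ℝ) (Ω : Set (ℝ × ℝ)) (v : ℤ × ℤ → ℂ) : ℝ :=
  ∑' i : {i : ℤ × ℤ // cellIn ε Ω i}, |gammaXY v i|

/-- The distance from a real number to `ℤ`. -/
def distZ (t : ℝ) : ℝ := |t - (Pint t : ℝ)|

/-- The geodesic distance on the unit circle `S¹ ⊆ ℂ` between two unit vectors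
(the angle between them, in `[0, π]`). -/
def dS1 (a b : ℂ) : ℝ := |(a * (starRingEnd ℂ) b).arg|

lemma distZ_eq' (t s : ℝ) (hs : |s| ≤ 1/2) (k : ℤ) (h : t = s + k) : distZ t = |s| := by
  have h1 : Pint t = ⌈s - 1/2⌉ + k := by
    unfold Pint
    rw [h, show s + (k:ℝ) - 1/2 = (s - 1/2) + (k:ℝ) by ring, Int.ceil_add_intCast]
  rw [abs_le] at hs
  rcases eq_or_lt_of_le hs.1 with h2 | h2
  · have : ⌈s - 1/2⌉ = -1 := by
      rw [← h2, show (-(1/2:ℝ) - 1/2) = ((-1:ℤ):ℝ) by norm_num, Int.ceil_intCast]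
    unfold distZ
    rw [h1, this, h, ← h2]
    push_cast
    rw [show -(1/2 : ℝ) + (k:ℝ) - (-1 + k) = 1/2 by ring]
    norm_num
  · have : ⌈s - 1/2⌉ = 0 := by
      apply Int.ceil_eq_zero_iff.2
      constructor
      · simpa using by linarith
      · simpa using by linarith
    unfold distZ
    rw [h1, this, h]
    push_cast
    congr 1
    ring

lemma abs_sub_pint_le (t : ℝ) : |t - (Pint t : ℝ)| ≤ 1/2 := by
  have h1 : t - 1/2 ≤ (⌈t - 1/2⌉ : ℝ) := Int.le_ceil _
  have h2 : (⌈t - 1/2⌉ : ℝ) < t - 1/2 + 1 := Int.ceil_lt_add_one _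
  rw [abs_le]; unfold Pint; constructor <;> linarith

lemma phaseu_sub (v : ℤ × ℤ → ℂ) (l : ℤ × ℤ) :
    ∃ c : ℤ, phaseu v l = (v l).arg / (2 * Real.pi) + c := by
  unfold phaseu
  split
  · exact ⟨0, by simp⟩
  · exact ⟨1, by push_cast; ring⟩

lemma phase_identity (v : ℤ × ℤ → ℂ) (hv : ∀ l, ‖v l‖ = 1) (i j : ℤ × ℤ) :
    2 * Real.pi * distZ (phaseu v i - phaseu v j) = dS1 (v i) (v j) := by
  have hπ : (0:ℝ) < Real.pi := Real.pi_pos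
  have hi : v i ≠ 0 := by intro h; simpa [h] using hv i
  have hj : v j ≠ 0 := by intro h; simpa [h] using hv j
  set θ := (v i * (starRingEnd ℂ) (v j)).arg with hθdef
  have hθle : |θ| ≤ Real.pi := Complex.abs_arg_le_pi _
  have hangle : (θ : Real.Angle) = ((v i).arg - (v j).arg : ℝ) := by
    rw [hθdef, Complex.arg_mul_coe_angle hi (by simpa using hj),
      Complex.arg_conj_coe_angle]
    rw [Real.Angle.coe_sub]
    abel
  obtain ⟨k, hk⟩ := Real.Angle.angle_eq_iff_two_pi_dvd_sub.1 hangle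
  obtain ⟨ci, hci⟩ := phaseu_sub v i
  obtain ⟨cj, hcj⟩ := phaseu_sub v j
  have h2π : (0:ℝ) < 2 * Real.pi := by positivity
  have hs : |θ / (2 * Real.pi)| ≤ 1/2 := by
    rw [abs_div, abs_of_pos h2π, div_le_iff₀ h2π]
    linarith
  have harg : (v i).arg = (v j).arg + θ - 2 * Real.pi * k := by linarith
  have ht : phaseu v i - phaseu v j = θ / (2 * Real.pi) + ((-k + ci - cj : ℤ) : ℝ) := by
    rw [hci, hcj, harg]
    push_cast
    field_simp
    ring
  rw [distZ_eq' _ _ hs _ ht, dS1, ← hθdef, abs_div, abs_of_pos h2π]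
  field_simp

lemma chord_le (a b : ℂ) (ha : ‖a‖ = 1) (hb : ‖b‖ = 1) :
    ‖a - b‖ ^ 2 ≤ (a * (starRingEnd ℂ) b).arg ^ 2 := by
  have hw : ‖a * (starRingEnd ℂ) b‖ = 1 := by
    rw [norm_mul, Complex.norm_conj, ha, hb]; ring
  have hwne : a * (starRingEnd ℂ) b ≠ 0 := by
    intro h; simp [h] at hw
  have hre : (a * (starRingEnd ℂ) b).re = Real.cos ((a * (starRingEnd ℂ) b).arg) := by
    rw [Complex.cos_arg hwne, hw]; simp
  have h1 : ‖a - b‖ ^ 2 = 2 - 2 * Real.cos ((a * (starRingEnd ℂ) b).arg) := by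
    rw [Complex.sq_norm, Complex.normSq_sub, ← Complex.sq_norm a, ← Complex.sq_norm b, ha, hb, hre]
    ring
  have h2 := Real.one_sub_sq_div_two_le_cos (x := (a * (starRingEnd ℂ) b).arg)
  linarith

/-- For every spin field `v : Ω⁰_ε → S¹` and every bond `(i,j) ∈ Ω¹_ε`,
`2π · dist(u(v)(i) − u(v)(j), ℤ) = d_{S¹}(v(i), v(j))`, where `u(v) = θ(v)/2π`.
Consequently `XY_ε(v) ≤ 4π² SD_ε(u(v))`. -/
theorem phase_geodesic_identity_and_XY_le_SD
    (Ω : Set (ℝ × ℝ)) (hΩo : IsOpen Ω) (hΩb : Bornology.IsBounded Ω)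
    (ε : ℝ) (hε : 0 < ε) (v : ℤ × ℤ → ℂ) (hv : ∀ l, ‖v l‖ = 1) :
    (∀ i j : ℤ × ℤ, bond ε Ω i j →
      2 * Real.pi * distZ (phaseu v i - phaseu v j) = dS1 (v i) (v j)) ∧
    XYen ε Ω v ≤ 4 * Real.pi ^ 2 * SDen ε Ω (phaseu v) := by
  constructor
  · intro i j _
    exact phase_identity v hv i j
  · -- finiteness of bonds
    obtain ⟨R, hR⟩ := hΩb.subset_closedBall 0
    have hSfin : Set.Finite {i : ℤ × ℤ | latticePt ε Ω i} := by
      apply Set.Finite.subset (Set.finite_Icc (-⌈R/ε⌉, -⌈R/ε⌉) (⌈R/ε⌉, ⌈R/ε⌉))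
      intro i hi
      have h1 : pt ε i ∈ Metric.closedBall (0 : ℝ × ℝ) R := hR hi
      rw [Metric.mem_closedBall, dist_zero_right] at h1
      have h2 : |ε * (i.1 : ℝ)| ≤ R ∧ |ε * (i.2 : ℝ)| ≤ R := by
        constructor <;>
        · refine le_trans ?_ h1
          rw [Prod.norm_def]
          first
          | exact le_max_left _ _
          | exact le_max_right _ _
      have key : ∀ m : ℤ, |ε * (m : ℝ)| ≤ R → -⌈R/ε⌉ ≤ m ∧ m ≤ ⌈R/ε⌉ := by
        intro m hm
        rw [abs_mul, abs_of_pos hε] at hm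
        have h3 : |(m:ℝ)| ≤ R / ε := by rw [le_div_iff₀ hε]; linarith [hm]
        have h4 : (R/ε : ℝ) ≤ (⌈R/ε⌉ : ℝ) := Int.le_ceil _
        rw [abs_le] at h3
        constructor
        · exact_mod_cast (by linarith : -((⌈R/ε⌉:ℤ):ℝ) ≤ (m:ℝ))
        · exact_mod_cast (by linarith : (m:ℝ) ≤ ((⌈R/ε⌉:ℤ):ℝ))
      obtain ⟨ha, hb⟩ := key i.1 h2.1
      obtain ⟨hc, hd⟩ := key i.2 h2.2
      exact ⟨⟨ha, hc⟩, ⟨hb, hd⟩⟩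
    have hbfin : Finite {b : (ℤ × ℤ) × (ℤ × ℤ) // bond ε Ω b.1 b.2} := by
      have : {b : (ℤ × ℤ) × (ℤ × ℤ) | bond ε Ω b.1 b.2} ⊆
          {i : ℤ × ℤ | latticePt ε Ω i} ×ˢ {i : ℤ × ℤ | latticePt ε Ω i} := by
        rintro ⟨i, j⟩ ⟨h1, h2, _⟩
        exact ⟨h1, h2⟩
      exact ((hSfin.prod hSfin).subset this).to_subtype
    -- termwise bound
    have hsum : ∑' b : {b : (ℤ × ℤ) × (ℤ × ℤ) // bond ε Ω b.1 b.2},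
          ‖v b.1.1 - v b.1.2‖ ^ 2
        ≤ ∑' b : {b : (ℤ × ℤ) × (ℤ × ℤ) // bond ε Ω b.1 b.2},
          4 * Real.pi ^ 2 * betaE (phaseu v) b.1.1 b.1.2 ^ 2 := by
      apply Summable.tsum_le_tsum _ (Summable.of_finite) (Summable.of_finite)
      rintro ⟨⟨i, j⟩, hb⟩
      show ‖v i - v j‖ ^ 2 ≤ 4 * Real.pi ^ 2 * betaE (phaseu v) i j ^ 2
      have hid := phase_identity v hv i j
      have hch := chord_le (v i) (v j) (hv i) (hv j)
      have hbe : distZ (phaseu v i - phaseu v j) = |betaE (phaseu v) i j| := by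
        have h := distZ_eq' (phaseu v i - phaseu v j)
            ((Pint (phaseu v j - phaseu v i) : ℝ) - (phaseu v j - phaseu v i))
            (by rw [abs_sub_comm]; exact abs_sub_pint_le _)
            (-(Pint (phaseu v j - phaseu v i)))
            (by push_cast; ring)
        rw [h, abs_sub_comm]
        rfl
      have : dS1 (v i) (v j) ^ 2 ≤ 4 * Real.pi ^ 2 * betaE (phaseu v) i j ^ 2 := by
        rw [← hid, hbe]
        apply le_of_eq
        rw [mul_pow, sq_abs]
        ring
      calc ‖v i - v j‖ ^ 2 ≤ dS1 (v i) (v j) ^ 2 := by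
            rw [dS1, sq_abs]
            exact hch
        _ ≤ _ := this
    rw [tsum_mul_left] at hsum
    rw [XYen, SDen]
    have h12 := mul_le_mul_of_nonneg_left hsum (by norm_num : (0:ℝ) ≤ 1/2)
    calc (1/2) * ∑' b : {b : (ℤ × ℤ) × (ℤ × ℤ) // bond ε Ω b.1 b.2},
          ‖v b.1.1 - v b.1.2‖ ^ 2
        ≤ (1/2) * (4 * Real.pi ^ 2 * ∑' b : {b : (ℤ × ℤ) × (ℤ × ℤ) // bond ε Ω b.1 b.2},
          betaE (phaseu v) b.1.1 b.1.2 ^ 2) := h12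
      _ = 4 * Real.pi ^ 2 * ((1/2) * ∑' b : {b : (ℤ × ℤ) × (ℤ × ℤ) // bond ε Ω b.1 b.2},
          betaE (phaseu v) b.1.1 b.1.2 ^ 2) := by ring
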